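/- Separation-distance upper bound for the one-sided transposition shuffle: for every n ≥ 1, every real c > 0, and every natural number t with t ≥ n·log n + c·n, we have sep(OST_n^t) = max_{σ∈S_n} (1 − n!·OST_n^t(σ)) ≤ e^{−c}. -/

import Mathlib

open scoped BigOperators

/-- The one-sided transposition shuffle on `S_n`:
`OST n σ = 1/(n·j)` if `σ = (i j)` with `1 ≤ i < j ≤ n` (here positions are the
elements of `Fin n`, so position `j` carries weight `1/(n(j+1))`), `OST n 1 = H_n/n`,
and `0` otherwise.  The convention `(i i) = e` makes the identity mass `H_n/n`. -/
noncomputable def OST (n : ℕ) : Equiv.Perm (Fin n) → ℝ := fun σ =>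
  ∑ j : Fin n, ∑ i : Fin n,
    if i ≤ j ∧ σ = Equiv.swap i j then ((n : ℝ) * (((j : ℕ) : ℝ) + 1))⁻¹ else 0

/-- Convolution of two distributions on `S_n`: `(P ⋆ Q)(g) = ∑_h P(g h⁻¹) Q(h)`. -/
noncomputable def convol {n : ℕ} (P Q : Equiv.Perm (Fin n) → ℝ) :
    Equiv.Perm (Fin n) → ℝ :=
  fun g => ∑ h : Equiv.Perm (Fin n), P (g * h⁻¹) * Q h

/-- `convPow P t` is the `t`-fold convolution `P^t` of `P` with itself. -/
noncomputable def convPow {n : ℕ} (P : Equiv.Perm (Fin n) → ℝ) :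
    ℕ → Equiv.Perm (Fin n) → ℝ
  | 0 => fun g => if g = 1 then 1 else 0
  | t + 1 => convol P (convPow P t)

/-- The separation distance of `P` from the uniform distribution on `S_n`:
`sep(P) = max_{σ∈S_n} (1 − n!·P(σ))`, written as a supremum over `S_n`. -/
noncomputable def sepDist {n : ℕ} (P : Equiv.Perm (Fin n) → ℝ) : ℝ :=
  ⨆ σ : Equiv.Perm (Fin n), (1 - (Nat.factorial n : ℝ) * P σ)

open Equiv Finset

variable {n : ℕ}

noncomputable def Aop (j : Fin n) : Function.End (Equiv.Perm (Fin n) → ℝ) :=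
  fun f g => (((j : ℕ) : ℝ) + 1)⁻¹ * ∑ i : Fin n, if i ≤ j then f (Equiv.swap i j * g) else 0

noncomputable def dl (n : ℕ) : Equiv.Perm (Fin n) → ℝ := fun g => if g = 1 then 1 else 0

lemma sum_ite_le (j : Fin n) (c : ℝ) :
    (∑ i : Fin n, if i ≤ j then c else 0) = (((j : ℕ) : ℝ) + 1) * c := by
  rw [← Finset.sum_filter]
  have h1 : (Finset.univ.filter (fun i => i ≤ j)) = Finset.Iic j := by ext i; simp
  rw [h1, Finset.sum_const, Fin.card_Iic, nsmul_eq_mul]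
  push_cast; ring

lemma Aop_const (j : Fin n) (c : ℝ) : Aop j (fun _ => c) = fun _ => c := by
  funext g
  show (((j : ℕ) : ℝ) + 1)⁻¹ * ∑ i : Fin n, (if i ≤ j then c else 0) = c
  rw [sum_ite_le, inv_mul_cancel_left₀]
  positivity

lemma Aop_nonneg (j : Fin n) {f : Equiv.Perm (Fin n) → ℝ} (hf : ∀ g, 0 ≤ f g) :
    ∀ g, 0 ≤ Aop j f g := by
  intro g
  show 0 ≤ (((j : ℕ) : ℝ) + 1)⁻¹ * ∑ i : Fin n, if i ≤ j then f (Equiv.swap i j * g) else 0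
  have : ∀ i : Fin n, 0 ≤ (if i ≤ j then f (Equiv.swap i j * g) else 0) := by
    intro i; split <;> simp [hf _]
  exact mul_nonneg (by positivity) (Finset.sum_nonneg fun i _ => this i)

lemma swap_shift {i j k : Fin n} (hki : k ≠ i) (hkj : k ≠ j) (l : Fin n) :
    Equiv.swap l k * Equiv.swap i j
      = Equiv.swap i j * Equiv.swap (Equiv.swap i j l) k := by
  have h := Equiv.swap_apply_apply (Equiv.swap i j) l k
  rw [Equiv.swap_apply_of_ne_of_ne hki hkj] at h
  rw [h]
  have hs : Equiv.swap i j * Equiv.swap i j = 1 := Equiv.swap_mul_self i j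
  rw [Equiv.swap_inv]
  calc Equiv.swap l k * Equiv.swap i j
      = Equiv.swap i j * (Equiv.swap i j * Equiv.swap l k * Equiv.swap i j) := by
        rw [← mul_assoc, ← mul_assoc, hs, one_mul]

lemma swap_le_iff {i j k : Fin n} (hij : i ≤ j) (hjk : j < k) (x : Fin n) :
    Equiv.swap i j x ≤ k ↔ x ≤ k := by
  rw [Equiv.swap_apply_def]
  split_ifs with h1 h2
  · subst h1; constructor <;> intro _ <;> [exact le_of_lt (lt_of_le_of_lt hij hjk); exact le_of_lt hjk]
  · subst h2; constructor <;> intro _ <;> [exact le_of_lt hjk; exact le_of_lt (lt_of_le_of_lt hij hjk)]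
  · rfl

lemma Aop_mul_expand (j k : Fin n) (f : Equiv.Perm (Fin n) → ℝ) (g : Equiv.Perm (Fin n)) :
    (Aop j * Aop k) f g = (((j : ℕ) : ℝ) + 1)⁻¹ * ((((k : ℕ) : ℝ) + 1)⁻¹ *
      ∑ i : Fin n, ∑ l : Fin n,
        if i ≤ j then (if l ≤ k then f (Equiv.swap l k * (Equiv.swap i j * g)) else 0) else 0) := by
  show (((j : ℕ) : ℝ) + 1)⁻¹ *
      (∑ i : Fin n, if i ≤ j then Aop k f (Equiv.swap i j * g) else 0) = _
  congr 1
  rw [Finset.mul_sum]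
  refine Finset.sum_congr rfl fun i _ => ?_
  by_cases h : i ≤ j
  · simp only [h, if_true]; rfl
  · simp [h]

lemma inner_reindex {i j k : Fin n} (hij : i ≤ j) (hjk : j < k)
    (f : Equiv.Perm (Fin n) → ℝ) (g : Equiv.Perm (Fin n)) :
    (∑ l : Fin n, if l ≤ k then f (Equiv.swap l k * (Equiv.swap i j * g)) else 0)
      = ∑ l : Fin n, if l ≤ k then f (Equiv.swap i j * (Equiv.swap l k * g)) else 0 := by
  have hki : k ≠ i := Fin.ne_of_gt (lt_of_le_of_lt hij hjk)
  have hkj : k ≠ j := Fin.ne_of_gt hjk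
  refine Fintype.sum_equiv (Equiv.swap i j) _ _ fun x => ?_
  simp only [swap_le_iff hij hjk]
  split_ifs with h
  · rw [← mul_assoc, ← mul_assoc, swap_shift hki hkj]
  · rfl

lemma Aop_comm_lt {j k : Fin n} (hjk : j < k) : Aop j * Aop k = Aop k * Aop j := by
  funext f g
  rw [Aop_mul_expand, Aop_mul_expand, mul_left_comm]
  congr 1; congr 1
  conv_rhs => rw [Finset.sum_comm]
  refine Finset.sum_congr rfl fun i _ => ?_
  by_cases hij : i ≤ j
  · simp only [hij, if_true]
    exact inner_reindex hij hjk f g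
  · simp [hij]

lemma Aop_comm (j k : Fin n) : Commute (Aop j) (Aop k) := by
  rcases lt_trichotomy j k with h | h | h
  · exact Aop_comm_lt h
  · rw [h]
  · exact (Aop_comm_lt h).symm

def fixSet (n m : ℕ) : Finset (Equiv.Perm (Fin n)) :=
  Finset.univ.filter (fun π => ∀ x : Fin n, m ≤ (x : ℕ) → π x = x)

def Ls (n m : ℕ) : List (Fin n) :=
  (List.range m).filterMap (fun i => if h : i < n then some ⟨i, h⟩ else none)

lemma fixSet_zero : fixSet n 0 = {1} := by
  ext π
  simp [fixSet, Equiv.ext_iff]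

lemma fixSet_univ : fixSet n n = Finset.univ := by
  ext π
  simp only [fixSet, Finset.mem_filter, Finset.mem_univ, true_and, iff_true]
  intro x hx
  exact absurd x.isLt (by omega)

lemma mem_fixSet {m : ℕ} {π : Equiv.Perm (Fin n)} :
    π ∈ fixSet n m ↔ ∀ x : Fin n, m ≤ (x : ℕ) → π x = x := by
  simp [fixSet]

lemma sum_fixSet_succ {m : ℕ} (hm : m < n) (F : Equiv.Perm (Fin n) → ℝ) :
    ∑ σ ∈ fixSet n (m+1), F σ
      = ∑ π ∈ fixSet n m, ∑ i : Fin n,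
          if i ≤ (⟨m, hm⟩ : Fin n) then F (Equiv.swap i ⟨m, hm⟩ * π) else 0 := by
  set em : Fin n := ⟨m, hm⟩ with hem
  have h1 : ∀ π : Equiv.Perm (Fin n),
      (∑ i : Fin n, if i ≤ em then F (Equiv.swap i em * π) else 0)
        = ∑ i ∈ Finset.univ.filter (fun i : Fin n => i ≤ em), F (Equiv.swap i em * π) :=
    fun π => (Finset.sum_filter _ _).symm
  simp only [h1]
  rw [← Finset.sum_product']
  refine Finset.sum_nbij' (fun σ => (Equiv.swap (σ em) em * σ, σ em))
    (fun p => Equiv.swap p.2 em * p.1) ?_ ?_ ?_ ?_ ?_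
  · -- forward membership
    intro σ hσ
    rw [mem_fixSet] at hσ
    have hσem : σ em ≤ em := by
      by_contra hlt
      push_neg at hlt
      have h2 : (m:ℕ) + 1 ≤ ((σ em : Fin n) : ℕ) := hlt
      have h3 : σ (σ em) = σ em := hσ _ h2
      have := σ.injective h3
      rw [this] at hlt
      exact lt_irrefl _ hlt
    refine Finset.mem_product.2 ⟨?_, by simpa using hσem⟩
    rw [mem_fixSet]
    intro x hx
    rcases Nat.lt_or_ge (m:ℕ) (x:ℕ) with hx' | hx'
    · have h4 : σ x = x := hσ x hx'
      have hσem' : ((σ em : Fin n) : ℕ) ≤ m := hσem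
      have hxe : x ≠ σ em := by
        intro h; have := congrArg Fin.val h; omega
      have hxm : x ≠ em := by
        intro h; have := congrArg Fin.val h; simp [hem] at this; omega
      simp [Equiv.Perm.mul_apply, h4, Equiv.swap_apply_of_ne_of_ne hxe hxm]
    · have hxm : (x:ℕ) = m := le_antisymm (by omega) hx
      have hx5 : x = em := Fin.ext hxm
      subst hx5
      simp [Equiv.Perm.mul_apply]
  · -- backward membership
    intro p hp
    rw [Finset.mem_product] at hp
    obtain ⟨hp1, hp2⟩ := hp
    rw [mem_fixSet] at hp1 ⊢
    intro x hx
    have hxm : m ≤ (x:ℕ) := by omega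
    have h4 : p.1 x = x := hp1 x hxm
    have hxi : x ≠ p.2 := by
      intro h
      have : (p.2 : ℕ) ≤ m := by exact (Finset.mem_filter.1 hp2).2
      omega
    have hxe : x ≠ em := by
      intro h; have := congrArg Fin.val h; simp [hem] at this; omega
    simp [Equiv.Perm.mul_apply, h4, Equiv.swap_apply_of_ne_of_ne hxi hxe]
  · -- left inverse
    intro σ _
    show Equiv.swap (σ em) em * (Equiv.swap (σ em) em * σ) = σ
    rw [← mul_assoc, Equiv.swap_mul_self, one_mul]
  · -- right inverse
    intro p hp
    rw [Finset.mem_product, mem_fixSet] at hp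
    have hpem : p.1 em = em := hp.1 em (le_refl m)
    have h6 : (Equiv.swap p.2 em * p.1) em = p.2 := by
      simp [Equiv.Perm.mul_apply, hpem]
    refine Prod.ext ?_ ?_
    · show Equiv.swap ((Equiv.swap p.2 em * p.1) em) em * (Equiv.swap p.2 em * p.1) = p.1
      rw [h6, ← mul_assoc, Equiv.swap_mul_self, one_mul]
    · exact h6
  · intro σ _
    show F σ = F (Equiv.swap (σ em) em * (Equiv.swap (σ em) em * σ))
    rw [← mul_assoc, Equiv.swap_mul_self, one_mul]

lemma Ls_zero : Ls n 0 = [] := rfl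

lemma Ls_succ {m : ℕ} (hm : m < n) : Ls n (m+1) = Ls n m ++ [⟨m, hm⟩] := by
  unfold Ls
  rw [List.range_succ, List.filterMap_append]
  congr 1
  simp [hm]

lemma mem_Ls_self (j : Fin n) : j ∈ Ls n n := by
  unfold Ls
  rw [List.mem_filterMap]
  exact ⟨(j : ℕ), by simp [j.isLt], by simp [j.isLt]⟩

lemma Ls_nodup : (Ls n n).Nodup := by
  unfold Ls
  refine List.Nodup.filterMap ?_ List.nodup_range
  intro a b c ha hb
  by_cases h1 : a < n
  · by_cases h2 : b < n
    · simp only [h1, dif_pos, Option.mem_def, Option.some_inj] at ha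
      simp only [h2, dif_pos, Option.mem_def, Option.some_inj] at hb
      rw [← ha] at hb
      exact (congrArg Fin.val hb).symm
    · simp [h2] at hb
  · simp [h1] at ha

lemma chain (m : ℕ) : ∀ (_ : m ≤ n) (f : Equiv.Perm (Fin n) → ℝ) (g : Equiv.Perm (Fin n)),
    (((Ls n m).map Aop).prod : Function.End (Equiv.Perm (Fin n) → ℝ)) f g
      = ((Nat.factorial m : ℝ))⁻¹ * ∑ π ∈ fixSet n m, f (π * g) := by
  induction m with
  | zero =>
    intro _ f g
    rw [Ls_zero, fixSet_zero]
    simp only [List.map_nil, List.prod_nil]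
    show f g = _
    simp
  | succ m ih =>
    intro hm f g
    have hm' : m < n := hm
    rw [Ls_succ hm', List.map_append, List.prod_append]
    show (((Ls n m).map Aop).prod * ([Aop ⟨m, hm'⟩].prod)) f g = _
    rw [List.prod_singleton]
    show (((Ls n m).map Aop).prod : Function.End (Equiv.Perm (Fin n) → ℝ)) (Aop ⟨m, hm'⟩ f) g = _
    rw [ih (le_of_lt hm') (Aop ⟨m, hm'⟩ f) g]
    rw [sum_fixSet_succ hm' (fun σ => f (σ * g))]
    have expand : ∀ π : Equiv.Perm (Fin n),
        Aop (⟨m, hm'⟩ : Fin n) f (π * g)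
          = ((m : ℝ) + 1)⁻¹ * ∑ i : Fin n,
              if i ≤ (⟨m, hm'⟩ : Fin n) then f (Equiv.swap i ⟨m, hm'⟩ * π * g) else 0 := by
      intro π
      show ((((⟨m, hm'⟩ : Fin n) : ℕ) : ℝ) + 1)⁻¹ * _ = _
      refine congrArg _ (Finset.sum_congr rfl fun i _ => ?_)
      split_ifs with h
      · rw [mul_assoc]
      · rfl
    simp only [expand]
    rw [← Finset.mul_sum, ← mul_assoc]
    congr 1
    rw [Nat.factorial_succ]
    push_cast
    rw [mul_inv]
    ring

lemma pairwise_comm (l : List (Fin n)) : (l.map Aop).Pairwise Commute := by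
  induction l with
  | nil => simp
  | cons a t ih =>
    rw [List.map_cons, List.pairwise_cons]
    exact ⟨fun b hb => by obtain ⟨j, _, rfl⟩ := List.mem_map.1 hb; exact Aop_comm a j, ih⟩

lemma prodA_const (l : List (Fin n)) (c : ℝ) :
    ((l.map Aop).prod : Function.End (Equiv.Perm (Fin n) → ℝ)) (fun _ => c) = fun _ => c := by
  induction l with
  | nil => rfl
  | cons a t ih =>
    rw [List.map_cons, List.prod_cons]
    show Aop a ((t.map Aop).prod (fun _ => c)) = _
    rw [ih, Aop_const]

lemma prodA_nonneg (l : List (Fin n)) {f : Equiv.Perm (Fin n) → ℝ} (hf : ∀ g, 0 ≤ f g) :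
    ∀ g, 0 ≤ ((l.map Aop).prod : Function.End (Equiv.Perm (Fin n) → ℝ)) f g := by
  induction l with
  | nil => exact hf
  | cons a t ih =>
    rw [List.map_cons, List.prod_cons]
    exact Aop_nonneg a ih

lemma prod_Ls_dl : ((((Ls n n).map Aop).prod : Function.End (Equiv.Perm (Fin n) → ℝ)) (dl n))
    = fun _ => ((Nat.factorial n : ℝ))⁻¹ := by
  funext g
  rw [chain n le_rfl, fixSet_univ]
  have h1 : ∀ π : Equiv.Perm (Fin n), dl n (π * g) = if π = g⁻¹ then (1:ℝ) else 0 := by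
    intro π
    simp [dl, mul_eq_one_iff_eq_inv]
  simp only [h1]
  rw [Finset.sum_ite_eq' Finset.univ (g⁻¹ : Equiv.Perm (Fin n)) (fun _ => (1:ℝ))]
  simp

lemma covering {l : List (Fin n)} (hl : ∀ j : Fin n, j ∈ l) :
    ((l.map Aop).prod : Function.End (Equiv.Perm (Fin n) → ℝ)) (dl n)
      = fun _ => ((Nat.factorial n : ℝ))⁻¹ := by
  have hsub : Ls n n ⊆ l := fun j _ => hl j
  obtain ⟨l1, hperm, hsl⟩ := (Ls_nodup).subperm hsub
  obtain ⟨r, hr⟩ := hsl.exists_perm_append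
  have hp2 : List.Perm l (r ++ Ls n n) :=
    hr.trans ((hperm.append_right r).trans List.perm_append_comm)
  have hmap : List.Perm (l.map Aop) ((r ++ Ls n n).map Aop) := hp2.map Aop
  rw [hmap.prod_eq' (pairwise_comm l), List.map_append, List.prod_append]
  show (r.map Aop).prod (((Ls n n).map Aop).prod (dl n)) = _
  rw [prod_Ls_dl]
  exact prodA_const r _

lemma convol_OST (f : Equiv.Perm (Fin n) → ℝ) (g : Equiv.Perm (Fin n)) :
    convol (OST n) f g = (n : ℝ)⁻¹ * ∑ j : Fin n, Aop j f g := by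
  have hcond : ∀ (i j : Fin n) (h : Equiv.Perm (Fin n)),
      (g * h⁻¹ = Equiv.swap i j) ↔ (h = Equiv.swap i j * g) := by
    intro i j h
    constructor
    · intro hh
      have h2 : h⁻¹ = g⁻¹ * Equiv.swap i j := by rw [← hh]; group
      rw [← inv_inv h, h2, mul_inv_rev, inv_inv, Equiv.swap_inv]
    · intro hh
      rw [hh]
      simp [mul_inv_rev, Equiv.swap_inv, ← mul_assoc]
  have key : ∀ j i : Fin n, (∑ h : Equiv.Perm (Fin n),
      if i ≤ j ∧ g * h⁻¹ = Equiv.swap i j then ((n : ℝ) * (((j : ℕ) : ℝ) + 1))⁻¹ * f h else 0)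
      = if i ≤ j then ((n : ℝ) * (((j : ℕ) : ℝ) + 1))⁻¹ * f (Equiv.swap i j * g) else 0 := by
    intro j i
    by_cases hij : i ≤ j
    · simp only [hcond, hij, true_and]
      rw [Finset.sum_ite_eq' Finset.univ (Equiv.swap i j * g)
        (fun h => ((n : ℝ) * (((j : ℕ) : ℝ) + 1))⁻¹ * f h)]
      simp
    · simp [hij]
  show (∑ h : Equiv.Perm (Fin n), OST n (g * h⁻¹) * f h) = _
  unfold OST
  simp only [Finset.sum_mul, ite_mul, zero_mul]
  rw [Finset.sum_comm]
  have step : ∀ j : Fin n, (∑ h : Equiv.Perm (Fin n), ∑ i : Fin n,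
      if i ≤ j ∧ g * h⁻¹ = Equiv.swap i j then ((n : ℝ) * (((j : ℕ) : ℝ) + 1))⁻¹ * f h else 0)
      = ∑ i : Fin n, if i ≤ j then ((n : ℝ) * (((j : ℕ) : ℝ) + 1))⁻¹ * f (Equiv.swap i j * g) else 0 := by
    intro j
    rw [Finset.sum_comm]
    exact Finset.sum_congr rfl fun i _ => key j i
  simp only [step]
  rw [Finset.mul_sum]
  refine Finset.sum_congr rfl fun j _ => ?_
  show _ = (n : ℝ)⁻¹ * ((((j : ℕ) : ℝ) + 1)⁻¹ * ∑ i : Fin n, if i ≤ j then f (Equiv.swap i j * g) else 0)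
  rw [← mul_assoc, ← mul_inv, Finset.mul_sum]
  refine Finset.sum_congr rfl fun i _ => ?_
  split_ifs with h
  · rfl
  · simp

lemma Aop_linear_combo (j : Fin n) {ι : Type*} [Fintype ι] (c : ℝ)
    (F : ι → Equiv.Perm (Fin n) → ℝ) (g : Equiv.Perm (Fin n)) :
    Aop j (fun x => c * ∑ w : ι, F w x) g = c * ∑ w : ι, Aop j (F w) g := by
  show (((j : ℕ) : ℝ) + 1)⁻¹ * ∑ i : Fin n,
      (if i ≤ j then c * ∑ w : ι, F w (Equiv.swap i j * g) else 0) = _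
  have h1 : ∀ i : Fin n, (if i ≤ j then c * ∑ w : ι, F w (Equiv.swap i j * g) else 0)
      = c * ∑ w : ι, (if i ≤ j then F w (Equiv.swap i j * g) else 0) := by
    intro i
    split_ifs with h
    · rfl
    · simp
  simp only [h1]
  rw [← Finset.mul_sum, Finset.sum_comm]
  show (((j : ℕ) : ℝ) + 1)⁻¹ * (c * ∑ w : ι, ∑ i : Fin n, _) = _
  rw [Finset.mul_sum, Finset.mul_sum, Finset.mul_sum]
  refine Finset.sum_congr rfl fun w _ => ?_
  show (((j : ℕ) : ℝ) + 1)⁻¹ * (c * ∑ i : Fin n, (if i ≤ j then F w (Equiv.swap i j * g) else 0))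
    = c * ((((j : ℕ) : ℝ) + 1)⁻¹ * ∑ i : Fin n, (if i ≤ j then F w (Equiv.swap i j * g) else 0))
  ring

lemma convPow_word (t : ℕ) :
    convPow (OST n) t = fun g => ((n : ℝ)^t)⁻¹ *
      ∑ w : Fin t → Fin n,
        (((List.ofFn w).map Aop).prod : Function.End (Equiv.Perm (Fin n) → ℝ)) (dl n) g := by
  induction t with
  | zero =>
    funext g
    show dl n g = _
    have : ∀ w : Fin 0 → Fin n, List.ofFn w = [] := fun w => List.ofFn_zero
    simp only [this]
    rw [Fintype.sum_unique (fun _ => ((List.map Aop []).prod : Function.End (Equiv.Perm (Fin n) → ℝ)) (dl n) g)]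
    show dl n g = (_ : ℝ)⁻¹ * dl n g
    norm_num
  | succ t ih =>
    funext g
    show convol (OST n) (convPow (OST n) t) g = _
    have hAop : ∀ j : Fin n,
        Aop j (fun g' => ((n : ℝ)^t)⁻¹ * ∑ w : Fin t → Fin n,
            (((List.ofFn w).map Aop).prod : Function.End (Equiv.Perm (Fin n) → ℝ)) (dl n) g') g
          = ((n : ℝ)^t)⁻¹ * ∑ w : Fin t → Fin n,
            (((List.ofFn (Fin.cons j w)).map Aop).prod : Function.End (Equiv.Perm (Fin n) → ℝ)) (dl n) g := by
      intro j
      rw [Aop_linear_combo]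
      congr 1
      refine Finset.sum_congr rfl fun w _ => ?_
      have hofn : List.ofFn (Fin.cons j w) = j :: List.ofFn w := by
        rw [List.ofFn_succ]
        congr 1
      rw [hofn, List.map_cons, List.prod_cons]
      rfl
    rw [convol_OST, ih]
    simp only [hAop]
    rw [← Finset.mul_sum, ← mul_assoc]
    have hcube : (n : ℝ)⁻¹ * ((n : ℝ)^t)⁻¹ = ((n : ℝ)^(t+1))⁻¹ := by
      rw [pow_succ, mul_inv, mul_comm]
    rw [hcube]
    congr 1
    refine Eq.trans ?_ (Fintype.sum_equiv (Fin.consEquiv (fun _ => Fin n))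
      (fun p => (((List.ofFn ((Fin.consEquiv (fun _ => Fin n)) p)).map Aop).prod :
        Function.End (Equiv.Perm (Fin n) → ℝ)) (dl n) g) _ (fun p => rfl))
    rw [Fintype.sum_prod_type]
    refine Finset.sum_congr rfl fun i _ => Finset.sum_congr rfl fun w _ => ?_
    congr 1

/-- Separation-distance upper bound for the one-sided transposition shuffle: for `n ≥ 1`,
`c > 0`, and every `t ≥ n log n + c n`, `sep(OST_n^t) ≤ e^{−c}`. -/
theorem ost_sep_upper (n : ℕ) (hn : 1 ≤ n) (c : ℝ) (hc : 0 < c) (t : ℕ)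
    (ht : (n : ℝ) * Real.log n + c * n ≤ (t : ℝ)) :
    sepDist (convPow (OST n) t) ≤ Real.exp (-c) := by
  classical
  have npos : (0:ℝ) < n := by exact_mod_cast hn
  set C : Finset (Fin t → Fin n) :=
    Finset.univ.filter (fun w => ∀ j : Fin n, j ∈ List.ofFn w) with hC
  set Cc : Finset (Fin t → Fin n) :=
    Finset.univ.filter (fun w => ¬ ∀ j : Fin n, j ∈ List.ofFn w) with hCc
  have hcard : C.card + Cc.card = n ^ t := by
    rw [hC, hCc, Finset.card_filter_add_card_filter_not]
    rw [Finset.card_univ, Fintype.card_fun]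
    simp
  have hCcbound : (Cc.card : ℝ) ≤ (n : ℝ) * ((n:ℝ) - 1) ^ t := by
    have hsub : Cc ⊆ (Finset.univ : Finset (Fin n)).biUnion
        (fun j => Finset.univ.filter (fun w : Fin t → Fin n => ∀ k, w k ≠ j)) := by
      intro w hw
      rw [hCc, Finset.mem_filter] at hw
      push_neg at hw
      obtain ⟨j, hj⟩ := hw.2
      refine Finset.mem_biUnion.2 ⟨j, Finset.mem_univ _, ?_⟩
      rw [Finset.mem_filter]
      refine ⟨Finset.mem_univ _, fun k hk => hj ?_⟩
      rw [List.mem_ofFn]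
      exact ⟨k, hk⟩
    have hsingle : ∀ j : Fin n,
        (Finset.univ.filter (fun w : Fin t → Fin n => ∀ k, w k ≠ j)).card = (n-1) ^ t := by
      intro j
      have : Finset.univ.filter (fun w : Fin t → Fin n => ∀ k, w k ≠ j)
          = Fintype.piFinset (fun _ : Fin t => Finset.univ.erase j) := by
        ext w
        simp [Fintype.mem_piFinset, Finset.mem_erase]
      rw [this, Fintype.card_piFinset]
      simp [Finset.card_erase_of_mem]
    have h1 : Cc.card ≤ n * (n-1)^t := by
      calc Cc.card ≤ _ := Finset.card_le_card hsub
        _ ≤ ∑ j : Fin n, (Finset.univ.filter (fun w : Fin t → Fin n => ∀ k, w k ≠ j)).card :=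
            Finset.card_biUnion_le
        _ = n * (n-1)^t := by simp [hsingle, Finset.sum_const]
    calc (Cc.card : ℝ) ≤ ((n * (n-1)^t : ℕ) : ℝ) := by exact_mod_cast h1
      _ = (n : ℝ) * ((n:ℝ) - 1) ^ t := by
          push_cast [Nat.cast_sub hn]
          ring
  have hpoint : ∀ σ : Equiv.Perm (Fin n),
      1 - (Nat.factorial n : ℝ) * convPow (OST n) t σ ≤ (Cc.card : ℝ) / (n:ℝ)^t := by
    intro σ
    have hfact : (0:ℝ) < (Nat.factorial n : ℝ) := by exact_mod_cast Nat.factorial_pos n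
    have hval : convPow (OST n) t σ = ((n : ℝ)^t)⁻¹ *
        ∑ w : Fin t → Fin n,
          (((List.ofFn w).map Aop).prod : Function.End (Equiv.Perm (Fin n) → ℝ)) (dl n) σ := by
      rw [convPow_word]
    have hterm : ∀ w : Fin t → Fin n,
        0 ≤ (((List.ofFn w).map Aop).prod : Function.End (Equiv.Perm (Fin n) → ℝ)) (dl n) σ := by
      intro w
      refine prodA_nonneg _ (fun g => ?_) σ
      unfold dl; split <;> norm_num
    have hcov : ∀ w ∈ C,
        (((List.ofFn w).map Aop).prod : Function.End (Equiv.Perm (Fin n) → ℝ)) (dl n) σ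
          = ((Nat.factorial n : ℝ))⁻¹ := by
      intro w hw
      rw [hC, Finset.mem_filter] at hw
      rw [covering hw.2]
    have hsum : (C.card : ℝ) * ((Nat.factorial n : ℝ))⁻¹
        ≤ ∑ w : Fin t → Fin n,
          (((List.ofFn w).map Aop).prod : Function.End (Equiv.Perm (Fin n) → ℝ)) (dl n) σ := by
      calc (C.card : ℝ) * ((Nat.factorial n : ℝ))⁻¹
          = ∑ w ∈ C, (((List.ofFn w).map Aop).prod : Function.End (Equiv.Perm (Fin n) → ℝ)) (dl n) σ := by
            rw [Finset.sum_congr rfl hcov, Finset.sum_const, nsmul_eq_mul]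
        _ ≤ _ := Finset.sum_le_sum_of_subset_of_nonneg (Finset.subset_univ C)
              (fun w _ _ => hterm w)
    have hmu : (C.card : ℝ) / (n:ℝ)^t ≤ (Nat.factorial n : ℝ) * convPow (OST n) t σ := by
      rw [hval]
      have hnt : (0:ℝ) < (n:ℝ)^t := by positivity
      calc (C.card : ℝ) / (n:ℝ)^t
          = (Nat.factorial n : ℝ) * (((n : ℝ)^t)⁻¹ * ((C.card : ℝ) * ((Nat.factorial n : ℝ))⁻¹)) := by
            field_simp
        _ ≤ _ := by
            refine mul_le_mul_of_nonneg_left ?_ (le_of_lt hfact)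
            exact mul_le_mul_of_nonneg_left hsum (by positivity)
    have hfrac : 1 - (C.card : ℝ) / (n:ℝ)^t = (Cc.card : ℝ) / (n:ℝ)^t := by
      have hnt : (0:ℝ) < (n:ℝ)^t := by positivity
      have : (C.card : ℝ) + (Cc.card : ℝ) = (n:ℝ)^t := by exact_mod_cast hcard
      field_simp
      linarith
    linarith
  have hanalytic : (Cc.card : ℝ) / (n:ℝ)^t ≤ Real.exp (-c) := by
    have hnt : (0:ℝ) < (n:ℝ)^t := by positivity
    have h2 : (Cc.card : ℝ) / (n:ℝ)^t ≤ (n:ℝ) * ((1 - 1/(n:ℝ)) ^ t) := by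
      rw [div_le_iff₀ hnt]
      calc (Cc.card : ℝ) ≤ (n : ℝ) * ((n:ℝ) - 1) ^ t := hCcbound
        _ = (n:ℝ) * ((1 - 1/(n:ℝ)) ^ t) * (n:ℝ)^t := by
            rw [mul_assoc, ← mul_pow]
            congr 2
            field_simp
    have h3 : (1 - 1/(n:ℝ)) ≤ Real.exp (-(1/(n:ℝ))) := by
      have := Real.add_one_le_exp (-(1/(n:ℝ)))
      linarith
    have h4 : (0:ℝ) ≤ 1 - 1/(n:ℝ) := by
      have : 1/(n:ℝ) ≤ 1 := by
        rw [div_le_one npos]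
        exact_mod_cast hn
      linarith
    have h5 : (1 - 1/(n:ℝ))^t ≤ Real.exp (-(1/(n:ℝ)))^t := pow_le_pow_left₀ h4 h3 t
    have h6 : Real.exp (-(1/(n:ℝ)))^t = Real.exp (-(t/(n:ℝ))) := by
      rw [← Real.exp_nat_mul]
      congr 1
      field_simp
    have h7 : (n:ℝ) * ((1 - 1/(n:ℝ)) ^ t) ≤ Real.exp (Real.log n) * Real.exp (-(t/(n:ℝ))) := by
      rw [Real.exp_log npos]
      refine mul_le_mul_of_nonneg_left ?_ (le_of_lt npos)
      rw [← h6]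
      exact h5
    have h8 : Real.exp (Real.log n) * Real.exp (-(t/(n:ℝ))) ≤ Real.exp (-c) := by
      rw [← Real.exp_add]
      apply Real.exp_le_exp.2
      have hdiv : Real.log n + c ≤ (t:ℝ)/(n:ℝ) := by
        rw [le_div_iff₀ npos]
        calc (Real.log n + c) * n = (n:ℝ) * Real.log n + c * n := by ring
          _ ≤ t := ht
      linarith
    linarith
  refine ciSup_le fun σ => le_trans (hpoint σ) hanalytic
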